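/- Let E be a real inner product space, f : E → ℝ continuously differentiable with ‖∇f(x)‖ ≤ 1 for all x ∈ E, let b > 0, and let γ : [0,b] → E be a C¹ curve with γ(0) = γ(b). Then ∫₀^b ( (1/2)‖γ'(u) − 2u·∇f(γ(u))‖² + 2u²(1 − ‖∇f(γ(u))‖²) ) du ≥ b³/6. (This is the core integral inequality, in the Euclidean-space model, of Lemma 2.1, which asserts that the static reduced length of a steady soliton satisfies λ(o,τ) ≥ τ/12; here b = √τ and the integrand is the reparametrized L-length integrand.) -/

import Mathlib

open Set MeasureTheory

/-- Euclidean-space model of the core integral inequality in Lemma 2.1: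
for a C¹ loop `γ : [0,b] → E` and `f` continuously differentiable with `‖∇f‖ ≤ 1`,
the reparametrized L-length of the loop is at least `b³/6`. -/
theorem loop_L_length_lower_bound
    {E : Type*} [NormedAddCommGroup E] [InnerProductSpace ℝ E] [CompleteSpace E]
    (f : E → ℝ) (hf : ContDiff ℝ 1 f) (hgrad : ∀ x, ‖gradient f x‖ ≤ 1)
    (b : ℝ) (hb : 0 < b) (γ γ' : ℝ → E)
    (hγ : ∀ u ∈ Icc (0:ℝ) b, HasDerivWithinAt γ (γ' u) (Icc (0:ℝ) b) u)
    (hγ' : ContinuousOn γ' (Icc (0:ℝ) b))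
    (hloop : γ 0 = γ b) :
    b ^ 3 / 6 ≤ ∫ u in (0:ℝ)..b,
      ((1/2) * ‖γ' u - (2 * u) • gradient f (γ u)‖ ^ 2
        + 2 * u ^ 2 * (1 - ‖gradient f (γ u)‖ ^ 2)) := by
  have hb0 : (0:ℝ) ≤ b := hb.le
  have huIcc : uIcc (0:ℝ) b = Icc 0 b := uIcc_of_le hb0
  -- continuity of the gradient
  have hgc : Continuous (fun x => gradient f x) := by
    simp only [gradient]
    exact (InnerProductSpace.toDual ℝ E).symm.continuous.comp (hf.continuous_fderiv one_ne_zero)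
  have hγc : ContinuousOn γ (Icc 0 b) := fun u hu => (hγ u hu).continuousWithinAt
  set g : ℝ → E := fun u => gradient f (γ u) with hgdef
  have hgcon : ContinuousOn g (Icc 0 b) := hgc.comp_continuousOn hγc
  set v : ℝ → ℝ := fun u => ‖γ' u‖ with hvdef
  have hvcon : ContinuousOn v (Icc 0 b) := hγ'.norm
  set h : ℝ → ℝ := fun u => f (γ u) - f (γ 0) with hhdef
  have hhcon : ContinuousOn h (Icc 0 b) :=
    ((hf.continuous.comp_continuousOn hγc).sub continuousOn_const)
  set h' : ℝ → ℝ := fun u => inner ℝ (g u) (γ' u) with hh'def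
  have hh'con : ContinuousOn h' (Icc 0 b) := hgcon.inner hγ'
  have hh0 : h 0 = 0 := by simp [hhdef]
  have hhb : h b = 0 := by simp [hhdef, ← hloop]
  -- derivative of h
  have hderiv : ∀ u ∈ Icc (0:ℝ) b, HasDerivWithinAt h (h' u) (Icc 0 b) u := by
    intro u hu
    have hd : HasFDerivAt f (InnerProductSpace.toDual ℝ E (gradient f (γ u))) (γ u) :=
      ((hf.differentiable one_ne_zero (γ u)).hasGradientAt).hasFDerivAt
    have := (hd.comp_hasDerivWithinAt u (hγ u hu)).sub_const (f (γ 0))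
    simpa [hhdef, hh'def, hgdef, InnerProductSpace.toDual_apply_apply] using this
  -- |h'| ≤ v
  have hh'le : ∀ u, |h' u| ≤ v u := by
    intro u
    calc |h' u| ≤ ‖g u‖ * ‖γ' u‖ := abs_real_inner_le_norm _ _
    _ ≤ 1 * ‖γ' u‖ := mul_le_mul_of_nonneg_right (hgrad (γ u)) (norm_nonneg _)
    _ = v u := by simp [hvdef]
  -- integrability on subintervals
  have hintv : ∀ c d, c ∈ Icc (0:ℝ) b → d ∈ Icc (0:ℝ) b →
      IntervalIntegrable v volume c d := fun c d hc hd =>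
    (hvcon.mono (uIcc_subset_Icc hc hd)).intervalIntegrable
  have hinth' : ∀ c d, c ∈ Icc (0:ℝ) b → d ∈ Icc (0:ℝ) b →
      IntervalIntegrable h' volume c d := fun c d hc hd =>
    (hh'con.mono (uIcc_subset_Icc hc hd)).intervalIntegrable
  -- FTC for h on subintervals of [0,b]
  have hftc : ∀ c d, c ∈ Icc (0:ℝ) b → d ∈ Icc (0:ℝ) b → c ≤ d →
      ∫ s in c..d, h' s = h d - h c := by
    intro c d hc hd hcd
    apply intervalIntegral.integral_eq_sub_of_hasDeriv_right_of_le hcd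
      (hhcon.mono (Icc_subset_Icc hc.1 hd.2))
    · intro x hx
      have hx' : x ∈ Icc (0:ℝ) b := ⟨le_trans hc.1 hx.1.le, le_trans hx.2.le hd.2⟩
      have hxint : Icc (0:ℝ) b ∈ nhds x :=
        Icc_mem_nhds (lt_of_le_of_lt hc.1 hx.1) (lt_of_lt_of_le hx.2 hd.2)
      exact ((hderiv x hx').hasDerivAt hxint).hasDerivWithinAt
    · exact hinth' c d hc hd
  set L : ℝ := ∫ s in (0:ℝ)..b, v s with hLdef
  have hbmem : b ∈ Icc (0:ℝ) b := ⟨hb0, le_rfl⟩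
  have h0mem : (0:ℝ) ∈ Icc (0:ℝ) b := ⟨le_rfl, hb0⟩
  -- key pointwise lower bound: 2 * h u ≥ -L
  have hkey : ∀ u ∈ Icc (0:ℝ) b, -L ≤ 2 * h u := by
    intro u hu
    have e1 : ∫ s in (0:ℝ)..u, h' s = h u := by
      have := hftc 0 u h0mem hu hu.1; rwa [hh0, sub_zero] at this
    have e2 : ∫ s in u..b, h' s = - h u := by
      have := hftc u b hu hbmem hu.2; rwa [hhb, zero_sub] at this
    have h1 : ∫ s in (0:ℝ)..u, (- v s) ≤ ∫ s in (0:ℝ)..u, h' s := by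
      apply intervalIntegral.integral_mono_on hu.1
        ((hintv 0 u h0mem hu).neg) (hinth' 0 u h0mem hu)
      intro s _; exact neg_le_of_abs_le (hh'le s)
    have h2 : ∫ s in u..b, h' s ≤ ∫ s in u..b, v s := by
      apply intervalIntegral.integral_mono_on hu.2 (hinth' u b hu hbmem) (hintv u b hu hbmem)
      intro s _; exact le_of_abs_le (hh'le s)
    rw [intervalIntegral.integral_neg, e1] at h1
    rw [e2] at h2
    have hsum : (∫ s in (0:ℝ)..u, v s) + ∫ s in u..b, v s = L :=
      intervalIntegral.integral_add_adjacent_intervals (hintv 0 u h0mem hu) (hintv u b hu hbmem)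
    linarith
  -- FTC for G u = 2*u*h u : ∫ (2*h + 2*u*h') = 0
  have hG : ∫ u in (0:ℝ)..b, (2 * h u + 2 * u * h' u) = 0 := by
    have : ∫ u in (0:ℝ)..b, (2 * h u + 2 * u * h' u)
        = (2 * b * h b) - (2 * 0 * h 0) := by
      apply intervalIntegral.integral_eq_sub_of_hasDeriv_right_of_le hb0
      · exact (continuousOn_const.mul continuousOn_id).mul hhcon
      · intro x hx
        have hx' : x ∈ Icc (0:ℝ) b := ⟨hx.1.le, hx.2.le⟩
        have hxint : Icc (0:ℝ) b ∈ nhds x := Icc_mem_nhds hx.1 hx.2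
        have hhx : HasDerivAt h (h' x) x := (hderiv x hx').hasDerivAt hxint
        have h2x : HasDerivAt (fun u : ℝ => 2 * u) 2 x := by
          simpa using (hasDerivAt_id x).const_mul (2:ℝ)
        have hprod := h2x.mul hhx
        simp only [Pi.mul_def] at hprod
        have : HasDerivAt (fun u => 2 * u * h u) (2 * h x + 2 * x * h' x) x := by
          convert hprod using 1
        exact this.hasDerivWithinAt
      · apply ContinuousOn.intervalIntegrable
        rw [huIcc]
        exact (continuousOn_const.mul hhcon).add
          ((continuousOn_const.mul continuousOn_id).mul hh'con)
    rw [this, hhb]; ring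
  -- pointwise identity for the integrand
  have hpt : ∀ u : ℝ, (1/2) * ‖γ' u - (2 * u) • gradient f (γ u)‖ ^ 2
      + 2 * u ^ 2 * (1 - ‖gradient f (γ u)‖ ^ 2)
      = ((1/2) * v u ^ 2 + 2 * h u + 2 * u ^ 2) - (2 * h u + 2 * u * h' u) := by
    intro u
    have hns : ‖γ' u - (2 * u) • g u‖ ^ 2
        = ‖γ' u‖ ^ 2 - 2 * inner ℝ (γ' u) ((2*u) • g u) + ‖(2*u) • g u‖ ^ 2 :=
      norm_sub_sq_real _ _
    have hi : (inner ℝ (γ' u) ((2*u) • g u) : ℝ) = (2*u) * h' u := by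
      rw [real_inner_smul_right, hh'def]
      dsimp only
      rw [real_inner_comm]
    have hn2 : ‖(2*u) • g u‖ ^ 2 = (2*u)^2 * ‖g u‖^2 := by
      rw [norm_smul, mul_pow, Real.norm_eq_abs, sq_abs]
    rw [show gradient f (γ u) = g u from rfl, hns, hi, hn2, hvdef]
    ring
  -- main integrability facts
  have hcont1 : ContinuousOn (fun u => (1/2) * v u ^ 2 + 2 * h u + 2 * u ^ 2) (Icc 0 b) :=
    ((continuousOn_const.mul (hvcon.pow 2)).add (continuousOn_const.mul hhcon)).add
      (continuous_const.mul (continuous_pow 2)).continuousOn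
  have hint1 : IntervalIntegrable (fun u => (1/2) * v u ^ 2 + 2 * h u + 2 * u ^ 2) volume 0 b := by
    apply ContinuousOn.intervalIntegrable; rw [huIcc]; exact hcont1
  have hint2 : IntervalIntegrable (fun u => 2 * h u + 2 * u * h' u) volume 0 b := by
    apply ContinuousOn.intervalIntegrable; rw [huIcc]
    exact (continuousOn_const.mul hhcon).add
      ((continuousOn_const.mul continuousOn_id).mul hh'con)
  have hsplit : (∫ u in (0:ℝ)..b,
      ((1/2) * ‖γ' u - (2 * u) • gradient f (γ u)‖ ^ 2
        + 2 * u ^ 2 * (1 - ‖gradient f (γ u)‖ ^ 2)))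
      = (∫ u in (0:ℝ)..b, ((1/2) * v u ^ 2 + 2 * h u + 2 * u ^ 2))
        - ∫ u in (0:ℝ)..b, (2 * h u + 2 * u * h' u) := by
    rw [← intervalIntegral.integral_sub hint1 hint2]
    apply intervalIntegral.integral_congr
    intro u _; exact hpt u
  clear_value g v h h' L
  rw [hsplit, hG, sub_zero]
  -- lower bound
  have hintlhs : IntervalIntegrable (fun u => b * v u - (b^2/2 + L) + 2 * u ^ 2) volume 0 b := by
    apply ContinuousOn.intervalIntegrable; rw [huIcc]
    exact ((continuousOn_const.mul hvcon).sub continuousOn_const).add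
      (continuous_const.mul (continuous_pow 2)).continuousOn
  have hmono : (∫ u in (0:ℝ)..b, (b * v u - (b^2/2 + L) + 2 * u ^ 2))
      ≤ ∫ u in (0:ℝ)..b, ((1/2) * v u ^ 2 + 2 * h u + 2 * u ^ 2) := by
    apply intervalIntegral.integral_mono_on hb0 hintlhs hint1
    intro u hu
    have hk := hkey u hu
    have hsq : b * v u ≤ 1/2 * v u ^ 2 + b ^ 2 / 2 := by nlinarith [sq_nonneg (v u - b)]
    linarith
  have hval : (∫ u in (0:ℝ)..b, (b * v u - (b^2/2 + L) + 2 * u ^ 2))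
      = b * L - (b^2/2 + L) * b + 2 * (b^3/3) := by
    rw [intervalIntegral.integral_add (((hintv 0 b h0mem hbmem).const_mul b).sub
        intervalIntegrable_const)
        ((show Continuous fun u : ℝ => 2 * u ^ 2 from continuous_const.mul (continuous_pow 2)).intervalIntegrable 0 b),
      intervalIntegral.integral_sub ((hintv 0 b h0mem hbmem).const_mul b)
        intervalIntegrable_const,
      intervalIntegral.integral_const_mul, intervalIntegral.integral_const,
      intervalIntegral.integral_const_mul, integral_pow]
    simp only [smul_eq_mul, sub_zero, ← hLdef]
    norm_num
    ring
  rw [hval] at hmono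
  nlinarith [hmono]
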